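/- Let τ ∈ (0,2) be real and let L₁,L₂,L₃,L₄ ∈ SL(2,ℂ) and L₁′,L₂′,L₃′,L₄′ ∈ SL(2,ℂ) both be admissible for τ. If the two quadruples have the same trace coordinates, i.e. tr(L₁L₂) = tr(L₁′L₂′), tr(L₂L₃) = tr(L₂′L₃′) and tr(L₂L₄) = tr(L₂′L₄′), then they are simultaneously conjugate: there exists G ∈ SL(2,ℂ) with Lⱼ′ = G·Lⱼ·G⁻¹ for all j = 1,2,3,4. -/

import Mathlib

set_option maxHeartbeats 1600000
open Matrix Complex

lemma neg_mul_neg_mul_neg (A B C : Matrix (Fin 2) (Fin 2) ℂ) :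
    (-A) * (-B) * (-C) = -(A * B * C) := by
  simp

noncomputable def JS : Matrix.SpecialLinearGroup (Fin 2) ℂ :=
  ⟨!![Complex.I, 0; 0, -Complex.I], by simp [Matrix.det_fin_two]⟩

lemma sl2_eq_form (M : Matrix.SpecialLinearGroup (Fin 2) ℂ)
    (h : Matrix.trace (M : Matrix (Fin 2) (Fin 2) ℂ) = 0) :
    ∃ a b c : ℂ, (M : Matrix (Fin 2) (Fin 2) ℂ) = !![a, b; c, -a] ∧ -(a*a) - b*c = 1 := by
  refine ⟨(M : Matrix (Fin 2) (Fin 2) ℂ) 0 0, (M : Matrix (Fin 2) (Fin 2) ℂ) 0 1,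
    (M : Matrix (Fin 2) (Fin 2) ℂ) 1 0, ?_, ?_⟩
  · have htr : (M : Matrix (Fin 2) (Fin 2) ℂ) 1 1 = -((M : Matrix (Fin 2) (Fin 2) ℂ) 0 0) := by
      have := Matrix.trace_fin_two (M : Matrix (Fin 2) (Fin 2) ℂ)
      rw [h] at this; linear_combination -this
    conv_lhs => rw [Matrix.eta_fin_two (M : Matrix (Fin 2) (Fin 2) ℂ)]
    rw [htr]
  · have hd := M.2
    rw [Matrix.det_fin_two] at hd
    have htr : (M : Matrix (Fin 2) (Fin 2) ℂ) 1 1 = -((M : Matrix (Fin 2) (Fin 2) ℂ) 0 0) := by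
      have := Matrix.trace_fin_two (M : Matrix (Fin 2) (Fin 2) ℂ)
      rw [h] at this; linear_combination -this
    rw [htr] at hd; linear_combination hd

lemma conj_to_J_aux (a b c : ℂ) (hd : -(a*a) - b*c = 1) :
    ∃ E : Matrix.SpecialLinearGroup (Fin 2) ℂ,
      (!![a, b; c, -a] : Matrix (Fin 2) (Fin 2) ℂ) * E
        = (E : Matrix (Fin 2) (Fin 2) ℂ) * (JS : Matrix (Fin 2) (Fin 2) ℂ) := by
  by_cases hb : b = 0
  · subst hb
    have ha2 : (a - Complex.I) * (a + Complex.I) = 0 := by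
      linear_combination -hd - Complex.I_mul_I
    rcases mul_eq_zero.mp ha2 with ha | ha
    · have ha : a = Complex.I := by linear_combination ha
      subst ha
      refine ⟨⟨!![1, 0; -Complex.I * c / 2, 1], by simp [Matrix.det_fin_two_of]⟩, ?_⟩
      show _ = (!![(1:ℂ), 0; -Complex.I * c / 2, 1] : Matrix (Fin 2) (Fin 2) ℂ) * _
      ext i j
      fin_cases i <;> fin_cases j <;> simp [JS, Matrix.mul_apply, Fin.sum_univ_two] <;>
        first
          | ring1
          | linear_combination (c/2) * Complex.I_mul_I
          | linear_combination (-c/2) * Complex.I_mul_I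
          | linear_combination (3*c/2) * Complex.I_mul_I
          | linear_combination (-3*c/2) * Complex.I_mul_I
          | linear_combination c * Complex.I_mul_I
          | linear_combination (-c) * Complex.I_mul_I
    · have ha : a = -Complex.I := by linear_combination ha
      subst ha
      refine ⟨⟨!![0, -1; 1, -Complex.I * c / 2], by simp [Matrix.det_fin_two_of]⟩, ?_⟩
      show _ = (!![(0:ℂ), -1; 1, -Complex.I * c / 2] : Matrix (Fin 2) (Fin 2) ℂ) * _
      ext i j
      fin_cases i <;> fin_cases j <;> simp [JS, Matrix.mul_apply, Fin.sum_univ_two] <;>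
        first
          | ring1
          | linear_combination (c/2) * Complex.I_mul_I
          | linear_combination (-c/2) * Complex.I_mul_I
          | linear_combination (3*c/2) * Complex.I_mul_I
          | linear_combination (-3*c/2) * Complex.I_mul_I
          | linear_combination c * Complex.I_mul_I
          | linear_combination (-c) * Complex.I_mul_I
  · have hI : Complex.I ≠ 0 := Complex.I_ne_zero
    set k : ℂ := 1 / (-2 * Complex.I * b) with hk
    refine ⟨⟨!![b * k, b; (Complex.I - a) * k, -Complex.I - a], ?_⟩, ?_⟩
    · rw [Matrix.det_fin_two_of, hk]; field_simp; ring
    · show (!![a, b; c, -a] : Matrix (Fin 2) (Fin 2) ℂ) * !![b * k, b; (Complex.I - a) * k, -Complex.I - a]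
        = !![b * k, b; (Complex.I - a) * k, -Complex.I - a] * !![Complex.I, 0; 0, -Complex.I]
      ext i j
      fin_cases i <;> fin_cases j <;> simp [JS, Matrix.mul_apply, Fin.sum_univ_two]
      · ring
      · ring
      · linear_combination (-k) * hd + (-k) * Complex.I_mul_I
      · linear_combination (-1 : ℂ) * hd - Complex.I_mul_I

lemma trace_conj (E A : Matrix.SpecialLinearGroup (Fin 2) ℂ) :
    Matrix.trace ((E⁻¹ * A * E : Matrix.SpecialLinearGroup (Fin 2) ℂ) : Matrix (Fin 2) (Fin 2) ℂ)
      = Matrix.trace (A : Matrix (Fin 2) (Fin 2) ℂ) := by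
  simp only [Matrix.SpecialLinearGroup.coe_mul]
  rw [Matrix.trace_mul_cycle, ← Matrix.SpecialLinearGroup.coe_mul, mul_inv_cancel,
    Matrix.SpecialLinearGroup.coe_one, Matrix.one_mul]

lemma inv_coe_neg (A : Matrix.SpecialLinearGroup (Fin 2) ℂ)
    (h : Matrix.trace (A : Matrix (Fin 2) (Fin 2) ℂ) = 0) :
    ((A⁻¹ : Matrix.SpecialLinearGroup (Fin 2) ℂ) : Matrix (Fin 2) (Fin 2) ℂ)
      = -(A : Matrix (Fin 2) (Fin 2) ℂ) := by
  rw [Matrix.SpecialLinearGroup.coe_inv, Matrix.adjugate_fin_two]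
  have h11 : (A : Matrix (Fin 2) (Fin 2) ℂ) 1 1 = -((A : Matrix (Fin 2) (Fin 2) ℂ) 0 0) := by
    have := Matrix.trace_fin_two (A : Matrix (Fin 2) (Fin 2) ℂ)
    rw [h] at this; linear_combination -this
  conv_rhs => rw [Matrix.eta_fin_two (A : Matrix (Fin 2) (Fin 2) ℂ)]
  rw [h11]
  ext i j; fin_cases i <;> fin_cases j <;> simp

lemma core_scaling (q r u v q' r' u' v' : ℂ) (hqr : q*r = q'*r') (huv : u*v = u'*v')
    (hur : u*r = u'*r') (hvq : v*q = v'*q') (hne : ¬(u*r = 0 ∧ v*q = 0)) :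
    ∃ μ : ℂ, μ ≠ 0 ∧ q' = μ*q ∧ r'*μ = r ∧ u' = μ*u ∧ v'*μ = v := by
  by_cases hur0 : u*r = 0
  · have hvq0 : v*q ≠ 0 := fun h => hne ⟨hur0, h⟩
    have hq : q ≠ 0 := right_ne_zero_of_mul hvq0
    have hv : v ≠ 0 := left_ne_zero_of_mul hvq0
    have hvq0' : v'*q' ≠ 0 := hvq ▸ hvq0
    have hq' : q' ≠ 0 := right_ne_zero_of_mul hvq0'
    have hv' : v' ≠ 0 := left_ne_zero_of_mul hvq0'
    refine ⟨q'/q, div_ne_zero hq' hq, by field_simp, ?_, ?_, ?_⟩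
    · field_simp; linear_combination -hqr
    · rw [div_mul_eq_mul_div, eq_div_iff hq]
      exact mul_right_cancel₀ hv' (by linear_combination (-q)*huv + u*hvq)
    · field_simp; linear_combination -hvq
  · have hu : u ≠ 0 := left_ne_zero_of_mul hur0
    have hr : r ≠ 0 := right_ne_zero_of_mul hur0
    have hur0' : u'*r' ≠ 0 := hur ▸ hur0
    have hu' : u' ≠ 0 := left_ne_zero_of_mul hur0'
    have hr' : r' ≠ 0 := right_ne_zero_of_mul hur0'
    refine ⟨u'/u, div_ne_zero hu' hu, ?_, ?_, by field_simp, ?_⟩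
    · rw [div_mul_eq_mul_div, eq_div_iff hu]
      exact mul_right_cancel₀ hr' (by linear_combination (-u)*hqr + q*hur)
    · field_simp; linear_combination -hur
    · field_simp; linear_combination -huv
theorem admissible_quadruples_with_equal_trace_coordinates_are_conjugate
    (τ : ℝ) (hτ0 : 0 < τ) (hτ2 : τ < 2)
    (L₁ L₂ L₃ L₄ L₁' L₂' L₃' L₄' : Matrix.SpecialLinearGroup (Fin 2) ℂ)
    (hprod : L₁ * L₂ * L₃ * L₄ = 1)
    (h1 : Matrix.trace (L₁ : Matrix (Fin 2) (Fin 2) ℂ) = 0)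
    (h2 : Matrix.trace (L₂ : Matrix (Fin 2) (Fin 2) ℂ) = 0)
    (h3 : Matrix.trace (L₃ : Matrix (Fin 2) (Fin 2) ℂ) = 0)
    (h4 : Matrix.trace (L₄ : Matrix (Fin 2) (Fin 2) ℂ) = (τ : ℂ))
    (hprod' : L₁' * L₂' * L₃' * L₄' = 1)
    (h1' : Matrix.trace (L₁' : Matrix (Fin 2) (Fin 2) ℂ) = 0)
    (h2' : Matrix.trace (L₂' : Matrix (Fin 2) (Fin 2) ℂ) = 0)
    (h3' : Matrix.trace (L₃' : Matrix (Fin 2) (Fin 2) ℂ) = 0)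
    (h4' : Matrix.trace (L₄' : Matrix (Fin 2) (Fin 2) ℂ) = (τ : ℂ))
    (hx : Matrix.trace ((L₁ : Matrix (Fin 2) (Fin 2) ℂ) * (L₂ : Matrix (Fin 2) (Fin 2) ℂ))
        = Matrix.trace ((L₁' : Matrix (Fin 2) (Fin 2) ℂ) * (L₂' : Matrix (Fin 2) (Fin 2) ℂ)))
    (hy : Matrix.trace ((L₂ : Matrix (Fin 2) (Fin 2) ℂ) * (L₃ : Matrix (Fin 2) (Fin 2) ℂ))
        = Matrix.trace ((L₂' : Matrix (Fin 2) (Fin 2) ℂ) * (L₃' : Matrix (Fin 2) (Fin 2) ℂ)))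
    (hz : Matrix.trace ((L₂ : Matrix (Fin 2) (Fin 2) ℂ) * (L₄ : Matrix (Fin 2) (Fin 2) ℂ))
        = Matrix.trace ((L₂' : Matrix (Fin 2) (Fin 2) ℂ) * (L₄' : Matrix (Fin 2) (Fin 2) ℂ))) :
    ∃ G : Matrix.SpecialLinearGroup (Fin 2) ℂ,
      L₁' = G * L₁ * G⁻¹ ∧ L₂' = G * L₂ * G⁻¹ ∧ L₃' = G * L₃ * G⁻¹ ∧ L₄' = G * L₄ * G⁻¹ := by
  have hτ : (τ : ℂ) ≠ 0 := Complex.ofReal_ne_zero.mpr (ne_of_gt hτ0)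
  -- normalize both quadruples so that the second element is JS
  obtain ⟨a, b, c, hM, hdM⟩ := sl2_eq_form L₂ h2
  obtain ⟨E, hE⟩ := conj_to_J_aux a b c hdM
  rw [← hM] at hE
  have hE2 : L₂ * E = E * JS := Subtype.ext (by
    rw [Matrix.SpecialLinearGroup.coe_mul, Matrix.SpecialLinearGroup.coe_mul]; exact hE)
  obtain ⟨a', b', c', hM', hdM'⟩ := sl2_eq_form L₂' h2'
  obtain ⟨E', hE'⟩ := conj_to_J_aux a' b' c' hdM'
  rw [← hM'] at hE'
  have hE2' : L₂' * E' = E' * JS := Subtype.ext (by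
    rw [Matrix.SpecialLinearGroup.coe_mul, Matrix.SpecialLinearGroup.coe_mul]; exact hE')
  set K₁ : Matrix.SpecialLinearGroup (Fin 2) ℂ := E⁻¹ * L₁ * E with hK₁def
  set K₂ : Matrix.SpecialLinearGroup (Fin 2) ℂ := E⁻¹ * L₂ * E with hK₂def
  set K₃ : Matrix.SpecialLinearGroup (Fin 2) ℂ := E⁻¹ * L₃ * E with hK₃def
  set K₄ : Matrix.SpecialLinearGroup (Fin 2) ℂ := E⁻¹ * L₄ * E with hK₄def
  set K₁' : Matrix.SpecialLinearGroup (Fin 2) ℂ := E'⁻¹ * L₁' * E' with hK₁'def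
  set K₂' : Matrix.SpecialLinearGroup (Fin 2) ℂ := E'⁻¹ * L₂' * E' with hK₂'def
  set K₃' : Matrix.SpecialLinearGroup (Fin 2) ℂ := E'⁻¹ * L₃' * E' with hK₃'def
  set K₄' : Matrix.SpecialLinearGroup (Fin 2) ℂ := E'⁻¹ * L₄' * E' with hK₄'def
  have hK2 : K₂ = JS := by
    rw [hK₂def, mul_assoc, hE2, ← mul_assoc, inv_mul_cancel, one_mul]
  have hK2' : K₂' = JS := by
    rw [hK₂'def, mul_assoc, hE2', ← mul_assoc, inv_mul_cancel, one_mul]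
  have htr1 : Matrix.trace (K₁ : Matrix (Fin 2) (Fin 2) ℂ) = 0 := (trace_conj E L₁).trans h1
  have htr3 : Matrix.trace (K₃ : Matrix (Fin 2) (Fin 2) ℂ) = 0 := (trace_conj E L₃).trans h3
  have htr1' : Matrix.trace (K₁' : Matrix (Fin 2) (Fin 2) ℂ) = 0 := (trace_conj E' L₁').trans h1'
  have htr3' : Matrix.trace (K₃' : Matrix (Fin 2) (Fin 2) ℂ) = 0 := (trace_conj E' L₃').trans h3'
  obtain ⟨p, q, r, hK1, hd1⟩ := sl2_eq_form K₁ htr1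
  obtain ⟨s, u, v, hK3, hd3⟩ := sl2_eq_form K₃ htr3
  obtain ⟨p', q', r', hK1', hd1'⟩ := sl2_eq_form K₁' htr1'
  obtain ⟨s', u', v', hK3', hd3'⟩ := sl2_eq_form K₃' htr3'
  have key : ∀ (F A B : Matrix.SpecialLinearGroup (Fin 2) ℂ),
      Matrix.trace (((F⁻¹*A*F)*(F⁻¹*B*F) : Matrix.SpecialLinearGroup (Fin 2) ℂ) : Matrix (Fin 2) (Fin 2) ℂ)
        = Matrix.trace ((A : Matrix (Fin 2) (Fin 2) ℂ) * (B : Matrix (Fin 2) (Fin 2) ℂ)) := by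
    intro F A B
    rw [show (F⁻¹*A*F)*(F⁻¹*B*F) = F⁻¹*(A*B)*F from by group, trace_conj,
      Matrix.SpecialLinearGroup.coe_mul]
  have hxK : Matrix.trace ((K₁ : Matrix (Fin 2) (Fin 2) ℂ) * (K₂ : Matrix (Fin 2) (Fin 2) ℂ))
      = Matrix.trace ((K₁' : Matrix (Fin 2) (Fin 2) ℂ) * (K₂' : Matrix (Fin 2) (Fin 2) ℂ)) := by
    rw [← Matrix.SpecialLinearGroup.coe_mul K₁ K₂, ← Matrix.SpecialLinearGroup.coe_mul K₁' K₂']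
    exact (key E L₁ L₂).trans (hx.trans (key E' L₁' L₂').symm)
  have hyK : Matrix.trace ((K₂ : Matrix (Fin 2) (Fin 2) ℂ) * (K₃ : Matrix (Fin 2) (Fin 2) ℂ))
      = Matrix.trace ((K₂' : Matrix (Fin 2) (Fin 2) ℂ) * (K₃' : Matrix (Fin 2) (Fin 2) ℂ)) := by
    rw [← Matrix.SpecialLinearGroup.coe_mul K₂ K₃, ← Matrix.SpecialLinearGroup.coe_mul K₂' K₃']
    exact (key E L₂ L₃).trans (hy.trans (key E' L₂' L₃').symm)
  have hzK : Matrix.trace ((K₂ : Matrix (Fin 2) (Fin 2) ℂ) * (K₄ : Matrix (Fin 2) (Fin 2) ℂ))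
      = Matrix.trace ((K₂' : Matrix (Fin 2) (Fin 2) ℂ) * (K₄' : Matrix (Fin 2) (Fin 2) ℂ)) := by
    rw [← Matrix.SpecialLinearGroup.coe_mul K₂ K₄, ← Matrix.SpecialLinearGroup.coe_mul K₂' K₄']
    exact (key E L₂ L₄).trans (hz.trans (key E' L₂' L₄').symm)
  have hK2c : (K₂ : Matrix (Fin 2) (Fin 2) ℂ) = !![Complex.I, 0; 0, -Complex.I] := by
    rw [hK2]; rfl
  have hK2c' : (K₂' : Matrix (Fin 2) (Fin 2) ℂ) = !![Complex.I, 0; 0, -Complex.I] := by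
    rw [hK2']; rfl
  -- p' = p and s' = s
  have hp : p' = p := by
    rw [hK1, hK1', hK2c, hK2c'] at hxK
    simp [Matrix.trace_fin_two, Matrix.mul_apply, Fin.sum_univ_two] at hxK
    have h2I : (2 : ℂ) * Complex.I ≠ 0 := by
      simp [Complex.I_ne_zero]
    apply mul_left_cancel₀ h2I
    linear_combination -hxK
  have hs : s' = s := by
    rw [hK3, hK3', hK2c, hK2c'] at hyK
    simp [Matrix.trace_fin_two, Matrix.mul_apply, Fin.sum_univ_two] at hyK
    have h2I : (2 : ℂ) * Complex.I ≠ 0 := by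
      simp [Complex.I_ne_zero]
    apply mul_left_cancel₀ h2I
    linear_combination -hyK
  -- product relation for K's
  have hprodK : K₁ * K₂ * K₃ * K₄ = 1 := by
    have e : K₁*K₂*K₃*K₄ = E⁻¹*(L₁*L₂*L₃*L₄)*E := by
      rw [hK₁def, hK₂def, hK₃def, hK₄def]; group
    rw [e, hprod]; group
  have hprodK' : K₁' * K₂' * K₃' * K₄' = 1 := by
    have e : K₁'*K₂'*K₃'*K₄' = E'⁻¹*(L₁'*L₂'*L₃'*L₄')*E' := by
      rw [hK₁'def, hK₂'def, hK₃'def, hK₄'def]; group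
    rw [e, hprod']; group
  have hK4g : K₄ = (K₁ * K₂ * K₃)⁻¹ := by
    have e : K₄ = (K₁*K₂*K₃)⁻¹ * (K₁*K₂*K₃*K₄) := by group
    rw [hprodK, mul_one] at e; exact e
  have hK4g' : K₄' = (K₁' * K₂' * K₃')⁻¹ := by
    have e : K₄' = (K₁'*K₂'*K₃')⁻¹ * (K₁'*K₂'*K₃'*K₄') := by group
    rw [hprodK', mul_one] at e; exact e
  have htr2 : Matrix.trace (K₂ : Matrix (Fin 2) (Fin 2) ℂ) = 0 := by
    rw [hK2c]; simp [Matrix.trace_fin_two]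
  have htr2' : Matrix.trace (K₂' : Matrix (Fin 2) (Fin 2) ℂ) = 0 := by
    rw [hK2c']; simp [Matrix.trace_fin_two]
  have hK4mat : (K₄ : Matrix (Fin 2) (Fin 2) ℂ)
      = -(!![s,u;v,-s] * !![Complex.I,0;0,-Complex.I] * !![p,q;r,-p]) := by
    have e : K₄ = K₃⁻¹ * K₂⁻¹ * K₁⁻¹ := by rw [hK4g]; group
    rw [e, Matrix.SpecialLinearGroup.coe_mul, Matrix.SpecialLinearGroup.coe_mul,
      inv_coe_neg K₁ htr1, inv_coe_neg K₂ htr2, inv_coe_neg K₃ htr3,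
      hK1, hK2c, hK3, neg_mul_neg_mul_neg]
  have hK4mat' : (K₄' : Matrix (Fin 2) (Fin 2) ℂ)
      = -(!![s',u';v',-s'] * !![Complex.I,0;0,-Complex.I] * !![p',q';r',-p']) := by
    have e : K₄' = K₃'⁻¹ * K₂'⁻¹ * K₁'⁻¹ := by rw [hK4g']; group
    rw [e, Matrix.SpecialLinearGroup.coe_mul, Matrix.SpecialLinearGroup.coe_mul,
      inv_coe_neg K₁' htr1', inv_coe_neg K₂' htr2', inv_coe_neg K₃' htr3',
      hK1', hK2c', hK3', neg_mul_neg_mul_neg]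
  -- trace equations
  have e4 : Complex.I * (u*r) - Complex.I * (v*q) = (τ : ℂ) := by
    have h : Matrix.trace (K₄ : Matrix (Fin 2) (Fin 2) ℂ) = (τ:ℂ) := (trace_conj E L₄).trans h4
    rw [hK4mat] at h
    simp [Matrix.trace_fin_two, Matrix.mul_apply, Fin.sum_univ_two] at h
    first | linear_combination -h | linear_combination h | linear_combination -2*h | linear_combination 2*h | linear_combination -(1/2 : ℂ)*h | linear_combination (1/2 : ℂ)*h
  have e4' : Complex.I * (u'*r') - Complex.I * (v'*q') = (τ : ℂ) := by
    have h : Matrix.trace (K₄' : Matrix (Fin 2) (Fin 2) ℂ) = (τ:ℂ) := (trace_conj E' L₄').trans h4'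
    rw [hK4mat'] at h
    simp [Matrix.trace_fin_two, Matrix.mul_apply, Fin.sum_univ_two] at h
    first | linear_combination -h | linear_combination h | linear_combination -2*h | linear_combination 2*h | linear_combination -(1/2 : ℂ)*h | linear_combination (1/2 : ℂ)*h
  have ez : u*r + v*q = u'*r' + v'*q' := by
    rw [hK2c, hK2c', hK4mat, hK4mat'] at hzK
    simp [Matrix.trace_fin_two, Matrix.mul_apply, Fin.sum_univ_two] at hzK
    rw [hp, hs] at hzK
    linear_combination (-1 : ℂ)*hzK + ((u*r + v*q) - (u'*r' + v'*q'))*Complex.I_mul_I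
  -- products are determined
  have hur : u*r = u'*r' := by
    have hI : Complex.I ≠ 0 := Complex.I_ne_zero
    apply mul_left_cancel₀ (show (2:ℂ)*Complex.I ≠ 0 by simp [hI])
    linear_combination e4 - e4' + Complex.I * ez
  have hvq : v*q = v'*q' := by
    have hI : Complex.I ≠ 0 := Complex.I_ne_zero
    apply mul_left_cancel₀ (show (2:ℂ)*Complex.I ≠ 0 by simp [hI])
    linear_combination e4' - e4 + Complex.I * ez
  have hqr : q*r = q'*r' := by linear_combination hd1' - hd1 + (p + p')*hp
  have huv : u*v = u'*v' := by linear_combination hd3' - hd3 + (s + s')*hs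
  have hne : ¬(u*r = 0 ∧ v*q = 0) := by
    rintro ⟨hz1, hz2⟩
    apply hτ
    rw [hz1, hz2] at e4
    linear_combination -e4
  obtain ⟨μ, hμ0, hμq, hμr, hμu, hμv⟩ := core_scaling q r u v q' r' u' v' hqr huv hur hvq hne
  obtain ⟨l, hl⟩ : ∃ l : ℂ, l^2 = μ := IsAlgClosed.exists_pow_nat_eq μ (n := 2) (by norm_num)
  have hl0 : l ≠ 0 := by intro h; apply hμ0; rw [← hl, h]; ring
  have hdetH : Matrix.det !![l, 0; 0, l⁻¹] = 1 := by
    rw [Matrix.det_fin_two_of]; field_simp; norm_num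
  set H : Matrix.SpecialLinearGroup (Fin 2) ℂ := ⟨!![l, 0; 0, l⁻¹], hdetH⟩ with hHdef
  have hHc : (H : Matrix (Fin 2) (Fin 2) ℂ) = !![l, 0; 0, l⁻¹] := rfl
  have hly : l * l⁻¹ = 1 := mul_inv_cancel₀ hl0
  have hq'2 : q' = l^2 * q := by rw [hl]; exact hμq
  have hr'2 : r' * l^2 = r := by rw [hl]; exact hμr
  have hu'2 : u' = l^2 * u := by rw [hl]; exact hμu
  have hv'2 : v' * l^2 = v := by rw [hl]; exact hμv
  have hC1 : K₁' * H = H * K₁ := by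
    apply Subtype.ext
    rw [Matrix.SpecialLinearGroup.coe_mul K₁' H, Matrix.SpecialLinearGroup.coe_mul H K₁,
      hK1, hK1', hHc]
    ext i j
    fin_cases i <;> fin_cases j
    · simp [Matrix.mul_apply, Fin.sum_univ_two]
      try linear_combination l*hp
    · simp [Matrix.mul_apply, Fin.sum_univ_two]
      try linear_combination (l*q)*hly + l⁻¹*hq'2
    · simp [Matrix.mul_apply, Fin.sum_univ_two]
      try linear_combination (-(r'*l))*hly + l⁻¹*hr'2
    · simp [Matrix.mul_apply, Fin.sum_univ_two]
      try linear_combination l⁻¹*hp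
  have hC3 : K₃' * H = H * K₃ := by
    apply Subtype.ext
    rw [Matrix.SpecialLinearGroup.coe_mul K₃' H, Matrix.SpecialLinearGroup.coe_mul H K₃,
      hK3, hK3', hHc]
    ext i j
    fin_cases i <;> fin_cases j
    · simp [Matrix.mul_apply, Fin.sum_univ_two]
      try linear_combination l*hs
    · simp [Matrix.mul_apply, Fin.sum_univ_two]
      try linear_combination (l*u)*hly + l⁻¹*hu'2
    · simp [Matrix.mul_apply, Fin.sum_univ_two]
      try linear_combination (-(v'*l))*hly + l⁻¹*hv'2
    · simp [Matrix.mul_apply, Fin.sum_univ_two]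
      try linear_combination l⁻¹*hs
  have hC2 : K₂' * H = H * K₂ := by
    rw [hK2, hK2']
    apply Subtype.ext
    rw [Matrix.SpecialLinearGroup.coe_mul JS H, Matrix.SpecialLinearGroup.coe_mul H JS, hHc]
    show (JS : Matrix (Fin 2) (Fin 2) ℂ) * _ = _ * (JS : Matrix (Fin 2) (Fin 2) ℂ)
    ext i j
    fin_cases i <;> fin_cases j <;> simp [JS, Matrix.mul_apply, Fin.sum_univ_two] <;> ring_nf
  have g1 : K₁' = H * K₁ * H⁻¹ := by rw [eq_mul_inv_iff_mul_eq]; exact hC1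
  have g2 : K₂' = H * K₂ * H⁻¹ := by rw [eq_mul_inv_iff_mul_eq]; exact hC2
  have g3 : K₃' = H * K₃ * H⁻¹ := by rw [eq_mul_inv_iff_mul_eq]; exact hC3
  have g4 : K₄' = H * K₄ * H⁻¹ := by
    rw [hK4g', hK4g, g1, g2, g3]; group
  refine ⟨E' * H * E⁻¹, ?_, ?_, ?_, ?_⟩
  · rw [show L₁' = E' * K₁' * E'⁻¹ from by rw [hK₁'def]; group]
    rw [g1, hK₁def]; group
  · rw [show L₂' = E' * K₂' * E'⁻¹ from by rw [hK₂'def]; group]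
    rw [g2, hK₂def]; group
  · rw [show L₃' = E' * K₃' * E'⁻¹ from by rw [hK₃'def]; group]
    rw [g3, hK₃def]; group
  · rw [show L₄' = E' * K₄' * E'⁻¹ from by rw [hK₄'def]; group]
    rw [g4, hK₄def]; group
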